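/- In Equiv.Perm (ℤ × ZMod 2), let τ be the permutation τ (i, j) = (i + 1, j) and let σ be the permutation with σ (i, j) = (i, j + 1) if i = 0 and σ (i, j) = (i, j) if i ≠ 0, and let G be the subgroup of Equiv.Perm (ℤ × ZMod 2) generated by {σ, τ}. Then there exists a group homomorphism φ : G →* ℤ with φ τ = 1 and φ σ = 0; φ is surjective; the kernel of φ is infinite; and every element g of the kernel of φ satisfies g * g = 1. Consequently ker φ is an infinite torsion normal subgroup of G all of whose nontrivial elements have order 2, and G ⧸ ker φ is isomorphic to ℤ. -/

import Mathlib

/-- The permutation `c` of the graph `𝔗`: shift the first coordinate on both lines. -/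
def tTau : Equiv.Perm (ℤ × ZMod 2) where
  toFun p := (p.1 + 1, p.2)
  invFun p := (p.1 - 1, p.2)
  left_inv p := by simp
  right_inv p := by simp

/-- The permutation `a` of the graph `𝔗`: swap the two lines at level `0`, fix everything
else. -/
def tSigma : Equiv.Perm (ℤ × ZMod 2) where
  toFun p := if p.1 = 0 then (p.1, p.2 + 1) else p
  invFun p := if p.1 = 0 then (p.1, p.2 - 1) else p
  left_inv p := by by_cases h : p.1 = 0 <;> simp [h, Prod.ext_iff]
  right_inv p := by by_cases h : p.1 = 0 <;> simp [h, Prod.ext_iff]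

lemma mem_K : ∀ g ∈ Subgroup.closure ({tSigma, tTau} : Set (Equiv.Perm (ℤ × ZMod 2))),
    ∃ n : ℤ, ∃ c : ℤ → ZMod 2, ∀ p : ℤ × ZMod 2, g p = (p.1 + n, p.2 + c p.1) := by
  intro g hg
  induction hg using Subgroup.closure_induction with
  | mem x hx =>
    rcases hx with hx | hx
    · exact ⟨0, fun i => if i = 0 then 1 else 0, by
        intro p; subst hx
        by_cases h : p.1 = 0 <;> simp [tSigma, h]⟩
    · exact ⟨1, fun _ => 0, by intro p; subst hx; simp [tTau]⟩
  | one => exact ⟨0, fun _ => 0, by intro p; simp⟩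
  | mul x y hx hy ihx ihy =>
    obtain ⟨n, c, hc⟩ := ihx
    obtain ⟨m, d, hd⟩ := ihy
    exact ⟨m + n, fun i => d i + c (i + m), by
      intro p; simp [Equiv.Perm.mul_apply, hd, hc, add_assoc]⟩
  | inv x hx ihx =>
    obtain ⟨n, c, hc⟩ := ihx
    refine ⟨-n, fun i => -c (i - n), ?_⟩
    intro p
    have : x (p.1 + -n, p.2 + -c (p.1 - n)) = p := by
      rw [hc]; simp only [sub_eq_add_neg, neg_add_cancel_right, Prod.mk.eta]
    calc x⁻¹ p = x⁻¹ (x (p.1 + -n, p.2 + -c (p.1 - n))) := by rw [this]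
    _ = _ := by simp [sub_eq_add_neg]

lemma tau_zpow (k : ℤ) : ∀ p : ℤ × ZMod 2, (tTau ^ k) p = (p.1 + k, p.2) := by
  induction k using Int.induction_on with
  | zero => intro p; simp
  | succ i ih =>
    intro p
    rw [zpow_add_one, Equiv.Perm.mul_apply]
    have h1 : tTau p = (p.1 + 1, p.2) := rfl
    rw [h1, ih]; simp; ring
  | pred i ih =>
    intro p
    rw [zpow_sub_one, Equiv.Perm.mul_apply]
    have h1 : tTau⁻¹ p = (p.1 - 1, p.2) := rfl
    rw [h1, ih]; simp; ring


/-- The transition group `G` of the graph `𝔗` surjects onto `ℤ` (exponent sum of `c`), sending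
`τ ↦ 1` and `σ ↦ 0`; the kernel (the boundary subgroup `ℬ₁`) is an infinite torsion normal
subgroup whose elements all square to the identity, and `G ⧸ ker φ ≃ ℤ`. -/
theorem stmt19 :
    ∃ φ : ↥(Subgroup.closure ({tSigma, tTau} : Set (Equiv.Perm (ℤ × ZMod 2)))) →*
        Multiplicative ℤ,
      φ ⟨tTau, Subgroup.subset_closure (by simp)⟩ = Multiplicative.ofAdd 1 ∧
      φ ⟨tSigma, Subgroup.subset_closure (by simp)⟩ = Multiplicative.ofAdd 0 ∧
      Function.Surjective φ ∧
      Infinite φ.ker ∧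
      (∀ g ∈ φ.ker, g * g = 1) ∧
      Nonempty
        ((↥(Subgroup.closure ({tSigma, tTau} : Set (Equiv.Perm (ℤ × ZMod 2)))) ⧸ φ.ker) ≃*
          Multiplicative ℤ) := by
  set G := Subgroup.closure ({tSigma, tTau} : Set (Equiv.Perm (ℤ × ZMod 2))) with hG
  have hτ : tTau ∈ G := Subgroup.subset_closure (by simp)
  have hσ : tSigma ∈ G := Subgroup.subset_closure (by simp)
  have hfst : ∀ g : G, ∀ p : ℤ × ZMod 2, ((g : Equiv.Perm (ℤ × ZMod 2)) p).1
      = p.1 + ((g : Equiv.Perm (ℤ × ZMod 2)) (0, 0)).1 := by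
    intro g p
    obtain ⟨n, c, hc⟩ := mem_K g.1 g.2
    rw [hc, hc]; simp
  let φ : G →* Multiplicative ℤ :=
    { toFun := fun g => Multiplicative.ofAdd (((g : Equiv.Perm (ℤ × ZMod 2)) (0, 0)).1)
      map_one' := by simp
      map_mul' := fun g h => by
        have := hfst g (((h : Equiv.Perm (ℤ × ZMod 2)) (0, 0)))
        simp only [Subgroup.coe_mul, Equiv.Perm.mul_apply, this, ← ofAdd_add]
        ring_nf }
  have hφτ : φ ⟨tTau, hτ⟩ = Multiplicative.ofAdd 1 := by
    show Multiplicative.ofAdd ((tTau (0, 0)).1) = _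
    simp [tTau]
  have hφσ : φ ⟨tSigma, hσ⟩ = Multiplicative.ofAdd 0 := by
    show Multiplicative.ofAdd ((tSigma (0, 0)).1) = _
    simp [tSigma]
  have hsurj : Function.Surjective φ := by
    intro z
    refine ⟨(⟨tTau, hτ⟩ : G) ^ (Multiplicative.toAdd z), ?_⟩
    rw [map_zpow, hφτ]
    simp [← ofAdd_zsmul]
  refine ⟨φ, hφτ, hφσ, hsurj, ?_, ?_, ⟨QuotientGroup.quotientKerEquivOfSurjective φ hsurj⟩⟩
  · -- Infinite kernel
    set t : G := ⟨tTau, hτ⟩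
    set s : G := ⟨tSigma, hσ⟩
    have hker : ∀ k : ℤ, t ^ k * s * t ^ (-k) ∈ φ.ker := by
      intro k
      rw [MonoidHom.mem_ker, map_mul, map_mul, map_zpow, map_zpow, hφτ, hφσ]
      rw [ofAdd_zero, mul_one, ← zpow_add]
      simp
    have key : ∀ k l : ℤ,
        ((((t ^ k * s * t ^ (-k) : G)) : Equiv.Perm (ℤ × ZMod 2)) (l, 0)).2
          = if l = k then 1 else 0 := by
      intro k l
      have hcoe : ((t ^ k * s * t ^ (-k) : G) : Equiv.Perm (ℤ × ZMod 2))
          = tTau ^ k * tSigma * tTau ^ (-k) := by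
        push_cast
        rfl
      rw [hcoe]
      simp only [Equiv.Perm.mul_apply, tau_zpow]
      by_cases h : l = k
      · subst h
        simp [tSigma]
      · have h2 : l + -k ≠ 0 := by omega
        simp [tSigma, h2, h]
    refine Infinite.of_injective (fun k : ℤ => (⟨t ^ k * s * t ^ (-k), hker k⟩ : φ.ker)) ?_
    intro k l hkl
    by_contra hne
    have h1 := key k k
    have h2 := key l k
    rw [show (t ^ k * s * t ^ (-k) : G) = t ^ l * s * t ^ (-l) from congrArg Subtype.val hkl]
      at h1
    rw [h2, if_neg (by omega)] at h1
    simp at h1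
  · -- elements of the kernel square to 1
    intro g hg
    obtain ⟨n, c, hc⟩ := mem_K g.1 g.2
    have hn : n = 0 := by
      have h0 : ((g : Equiv.Perm (ℤ × ZMod 2)) (0, 0)).1 = 0 := by
        have h' : Multiplicative.ofAdd (((g : Equiv.Perm (ℤ × ZMod 2)) (0, 0)).1)
            = Multiplicative.ofAdd 0 := (MonoidHom.mem_ker).1 hg
        exact Multiplicative.ofAdd.injective h'
      rw [hc] at h0
      simpa using h0
    subst hn
    have h2 : ∀ x : ZMod 2, x + x = 0 := by decide
    refine Subtype.ext (Equiv.ext fun p => ?_)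
    have hmul : ((g * g : G) : Equiv.Perm (ℤ × ZMod 2)) p
        = (g : Equiv.Perm (ℤ × ZMod 2)) ((g : Equiv.Perm (ℤ × ZMod 2)) p) := rfl
    rw [hmul, hc, hc]
    show _ = p
    simp [add_assoc, h2]
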